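/- arXiv:1201.5937 — 2 statements merged into one kernel-verified Lean document; each statement's English description precedes it below -/
import Mathlib

section
/- The cyclic shift of blocks β, defined on words w = B_1 B_2 ... B_N (with blocks B_i) by β(w) = B_2 ... B_N B_1, generates a group of permutations {Id, β, ..., β^{N-1}} of the blocks, and for any word w in W_n (primitive, beginning with a run of its smallest letter, ending with a different letter), all N words in the block orbit ⟨w⟩_β are distinct. -/
open List

variable {A : Type*}

/-- A word is primitive if it is nonempty and not a power `u^r` with `r ≥ 2`. -/
def Primitive (w : List A) : Prop :=
  w ≠ [] ∧ ∀ (u : List A) (r : ℕ), 2 ≤ r → w ≠ (List.replicate r u).flatten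

/-- A block with respect to the letter `a`: an initial run of `a`'s followed by
a nonempty word containing no `a`. -/
def IsBlock (a : A) (B : List A) : Prop :=
  ∃ (k : ℕ) (t : List A), 0 < k ∧ t ≠ [] ∧ a ∉ t ∧ B = List.replicate k a ++ t

/-- `Bs` is the block decomposition of `w` with respect to the letter `a`. -/
def IsBlockDecomp (a : A) (Bs : List (List A)) (w : List A) : Prop :=
  w = Bs.flatten ∧ ∀ B ∈ Bs, IsBlock a B

/-- `a` is the smallest letter of the word `w`. -/
def Smallest [LinearOrder A] (a : A) (w : List A) : Prop :=
  a ∈ w ∧ ∀ b ∈ w, a ≤ b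

/- ### Auxiliary lemmas -/

lemma rot_sub {w : List A} {p q : ℕ} (hp : w.rotate p = w) (hq : w.rotate q = w)
    (h : q ≤ p) : w.rotate (p - q) = w := by
  have h1 : (w.rotate (p - q)).rotate q = w.rotate q := by
    rw [rotate_rotate, Nat.sub_add_cancel h, hp, hq]
  exact rotate_eq_rotate.mp h1

lemma rot_mul {w : List A} {d : ℕ} (hd : w.rotate d = w) : ∀ q, w.rotate (q * d) = w
  | 0 => by simp
  | q + 1 => by
      rw [Nat.succ_mul, ← rotate_rotate, rot_mul hd q, hd]

lemma rot_gcd {w : List A} (p q : ℕ) (hp : w.rotate p = w) (hq : w.rotate q = w) :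
    w.rotate (Nat.gcd p q) = w := by
  induction p, q using Nat.gcd.induction with
  | H0 n => simpa using hq
  | H1 m n hm ih =>
      rw [Nat.gcd_rec]
      have hmd := Nat.mod_add_div' n m
      have key : n % m = n - n / m * m := by omega
      refine ih ?_ hp
      rw [key]
      exact rot_sub hq (rot_mul hp (n / m)) (by omega)

lemma length_flatten_replicate (u : List A) (r : ℕ) :
    ((List.replicate r u).flatten).length = r * u.length := by
  induction r with
  | zero => simp
  | succ r ih => rw [List.replicate_succ, List.flatten_cons, List.length_append, ih]; ring

lemma getElem?_flatten_replicate (u : List A) :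
    ∀ (r i : ℕ), i < r * u.length →
      ((List.replicate r u).flatten)[i]? = u[i % u.length]?
  | 0, i, h => by omega
  | r + 1, i, h => by
      rw [List.replicate_succ, List.flatten_cons]
      rcases Nat.lt_or_ge i u.length with hi | hi
      · rw [List.getElem?_append_left hi, Nat.mod_eq_of_lt hi]
      · have hmul : (r + 1) * u.length = r * u.length + u.length := by ring
        rw [List.getElem?_append_right hi,
          getElem?_flatten_replicate u r (i - u.length) (by omega)]
        conv_rhs => rw [Nat.mod_eq_sub_mod hi]

lemma periodic_eq {w : List A} {g : ℕ} (hg : 0 < g) (hgn : g ∣ w.length)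
    (hn : 0 < w.length) (hrot : w.rotate g = w) :
    w = (List.replicate (w.length / g) (w.take g)).flatten := by
  have hgle : g ≤ w.length := Nat.le_of_dvd hn hgn
  have htl : (w.take g).length = g := by
    rw [List.length_take]; omega
  have hdm : w.length / g * g = w.length := Nat.div_mul_cancel hgn
  apply List.ext_getElem?
  intro idx
  by_cases hidx : idx < w.length
  · rw [getElem?_flatten_replicate (w.take g) (w.length / g) idx (by rw [htl, hdm]; exact hidx)]
    rw [htl, getElem?_take_of_lt (Nat.mod_lt _ hg)]
    -- goal : w[idx]? = w[idx % g]?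
    have hw : w.rotate (idx / g * g) = w := rot_mul hrot (idx / g)
    have h1 := List.getElem?_rotate (l := w) (n := idx / g * g)
      (m := idx % g) (lt_of_lt_of_le (Nat.mod_lt _ hg) hgle)
    rw [hw, Nat.mod_add_div' idx g, Nat.mod_eq_of_lt hidx] at h1
    exact h1.symm
  · rw [List.getElem?_eq_none (by omega),
      List.getElem?_eq_none (by rw [length_flatten_replicate, htl, hdm]; omega)]

lemma rot_ne_self {w : List A} (hprim : Primitive w) {d : ℕ} (hd : 0 < d)
    (hdn : d < w.length) (hrot : w.rotate d = w) : False := by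
  have hn : 0 < w.length := by omega
  set g := Nat.gcd d w.length with hgdef
  have hg : 0 < g := Nat.gcd_pos_of_pos_left _ hd
  have hgd : g ≤ d := Nat.le_of_dvd hd (Nat.gcd_dvd_left _ _)
  have hgn : g ∣ w.length := Nat.gcd_dvd_right _ _
  have hwg : w.rotate g = w := rot_gcd d w.length hrot (List.rotate_length w)
  have hr2 : 2 ≤ w.length / g := by
    rcases hgn with ⟨r, hr⟩
    have : w.length / g = r := by rw [hr, Nat.mul_div_cancel_left _ hg]
    rw [this]
    by_contra hcon
    interval_cases r <;> omega
  exact hprim.2 (w.take g) (w.length / g) hr2 (periodic_eq hg hgn hn hwg)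

/-- The cyclic shift of blocks generates a cyclic group (shifting by `N` is the
identity), and for a word in `W_n` all `N` words of its block orbit are distinct. -/
theorem stmt_2 [LinearOrder A] (w : List A) (a : A) (Bs : List (List A))
    (ha : Smallest a w) (hdec : IsBlockDecomp a Bs w) (hprim : Primitive w) :
    Bs.rotate Bs.length = Bs ∧
    ∀ i j, i < Bs.length → j < Bs.length →
      (Bs.rotate i).flatten = (Bs.rotate j).flatten → i = j := by
  refine ⟨List.rotate_length Bs, ?_⟩
  set N := Bs.length with hN
  set n := w.length with hn
  obtain ⟨hw, hblocks⟩ := hdec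
  have hn0 : 0 < n := List.length_pos_iff.mpr hprim.1
  -- prefix-length function
  set m : ℕ → ℕ := fun i => ((Bs.take i).flatten).length with hm
  have hmN : m N = n := by
    simp only [hm]
    rw [List.take_of_length_le (le_of_eq hN.symm), hn, hw]
  have hstep : ∀ i, i < N → m i < m (i + 1) := by
    intro i hi
    have hBne : Bs[i] ≠ [] := by
      obtain ⟨k, t, hk, ht, -, hB⟩ := hblocks Bs[i] (List.getElem_mem hi)
      intro hnil
      rw [hB] at hnil
      have := congrArg List.length hnil
      simp at this
      omega
    have hBl : 0 < Bs[i].length := List.length_pos_iff.mpr hBne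
    have : Bs.take (i + 1) = Bs.take i ++ [Bs[i]] := by
      rw [← List.take_concat_get' Bs i hi]
    simp only [hm, this, List.flatten_append, List.length_append]
    simp
    omega
  have hmono : ∀ i j, i < j → j ≤ N → m i < m j := by
    intro i j hij hjN
    induction j with
    | zero => omega
    | succ k ih =>
      rcases Nat.lt_or_ge i k with h | h
      · exact (ih h (by omega)).trans (hstep k (by omega))
      · have : i = k := by omega
        subst this
        exact hstep i (by omega)
  have hmlt : ∀ j, j < N → m j < n := by
    intro j hj
    have := hmono j N hj le_rfl
    omega
  -- flatten of rotation is rotation of w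
  have hflat : ∀ i, i ≤ N → (Bs.rotate i).flatten = w.rotate (m i) := by
    intro i hiN
    have h1 : Bs.rotate i = Bs.drop i ++ Bs.take i :=
      List.rotate_eq_drop_append_take (by omega)
    have hsplit : w = (Bs.take i).flatten ++ (Bs.drop i).flatten := by
      rw [hw, ← List.flatten_append, List.take_append_drop]
    have hmi : m i ≤ n := by
      have := congrArg List.length hsplit
      simp only [List.length_append] at this
      have hmi' : m i = ((Bs.take i).flatten).length := rfl
      omega
    have h2 : w.rotate (m i) = w.drop (m i) ++ w.take (m i) :=
      List.rotate_eq_drop_append_take (by omega)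
    have htake : w.take (m i) = (Bs.take i).flatten := by
      rw [hsplit]; exact List.take_left' rfl
    have hdrop : w.drop (m i) = (Bs.drop i).flatten := by
      rw [hsplit]; exact List.drop_left' rfl
    rw [h1, List.flatten_append, h2, htake, hdrop]
  -- main argument
  intro i j hi hj heq
  rw [hflat i (le_of_lt hi), hflat j (le_of_lt hj)] at heq
  by_contra hne
  have key : ∀ p q, p < q → q < N → w.rotate (m p) = w.rotate (m q) → False := by
    intro p q hpq hqN heq'
    set d := m q - m p with hd
    have hmpq : m p < m q := hmono p q hpq (le_of_lt hqN)
    have hd0 : 0 < d := by omega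
    have hdn : d < n := by have := hmlt q hqN; omega
    have hrot : w.rotate d = w := by
      have h1 : (w.rotate d).rotate (m p) = w.rotate (m p) := by
        rw [rotate_rotate]
        have : d + m p = m q := by omega
        rw [this, heq']
      exact rotate_eq_rotate.mp h1
    exact rot_ne_self hprim hd0 hdn hrot
  rcases Nat.lt_or_ge i j with h | h
  · exact key i j h hj heq
  · exact key j i (by omega) hi heq.symm
end

section
/- The map φ from the set P_n of primitive words of length n to W_n, sending w to itself if w ∈ W_n and otherwise to the unique rotation of w beginning with the last run of the smallest letter of w, is surjective, and for each w ∈ W_n the preimage φ^{-1}({w}) has cardinality equal to the length of the first block of w. -/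
open List

variable {A : Type*}

/-- Membership in `W`: a primitive word beginning with a run of its smallest letter
and ending with a letter different from the smallest (equivalently, admitting a
block decomposition with respect to its smallest letter). -/
def InW [LinearOrder A] (w : List A) : Prop :=
  Primitive w ∧ ∃ (a : A) (Bs : List (List A)), Smallest a w ∧ IsBlockDecomp a Bs w

/-- The class `C(w)`: all words of `W` obtained by permuting the blocks `Bs` of `w`. -/
def classOf [LinearOrder A] (Bs : List (List A)) : Set (List A) :=
  {v | ∃ σ : Equiv.Perm (Fin Bs.length),
        v = (List.ofFn (fun t => Bs.get (σ t))).flatten ∧ InW v}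

/-- The block orbit of a word with block decomposition `Cs`: all cyclic shifts of
its blocks. -/
def blockOrbit (Cs : List (List A)) : Set (List A) :=
  {v | ∃ i, v = (Cs.rotate i).flatten}

open scoped Classical in
/-- The map `φ` on primitive words: the identity on `W_n`, and otherwise the rotation
of `v` beginning with the last run of the smallest letter of `v`. -/
noncomputable def phi [LinearOrder A] (v : List A) : List A :=
  if InW v then v
  else v.rotate (sSup {i | i < v.length ∧ ∃ a, Smallest a v ∧ v[i]? = some a ∧
    (i = 0 ∨ v[i - 1]? ≠ some a)})

lemma comm_pow (t : List A) (l : List A) (h : t ++ l = l ++ t) (hd : t.length ∣ l.length) :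
    l = (List.replicate (l.length / t.length) t).flatten := by
  suffices H : ∀ m, ∀ l : List A, l.length = m → t ++ l = l ++ t → t.length ∣ l.length →
      l = (List.replicate (l.length / t.length) t).flatten from H _ l rfl h hd
  intro m
  induction m using Nat.strong_induction_on with
  | _ m ih =>
  intro l hm h hd
  subst hm
  rcases eq_or_ne l [] with rfl | hl
  · simp
  have hlpos : 0 < l.length := List.length_pos_iff.mpr hl
  have htpos : 0 < t.length := by
    rcases Nat.eq_zero_or_pos t.length with h0 | h
    · rw [h0] at hd; exact absurd (Nat.eq_zero_of_zero_dvd hd) (by omega)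
    · exact h
  have htl : t.length ≤ l.length := Nat.le_of_dvd hlpos hd
  have htake : l.take t.length = t := by
    have := congrArg (·.take t.length) h
    simpa [List.take_left, List.take_append_of_le_length htl] using this.symm
  have hsplit : l = t ++ l.drop t.length := by
    conv_lhs => rw [← List.take_append_drop t.length l, htake]
  have hcomm' : t ++ l.drop t.length = l.drop t.length ++ t := by
    have : t ++ (t ++ l.drop t.length) = (t ++ l.drop t.length) ++ t := by
      rw [← hsplit]; exact h
    rw [List.append_assoc] at this
    exact List.append_cancel_left this
  have hlen : (l.drop t.length).length = l.length - t.length := by simp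
  have hdvd' : t.length ∣ (l.drop t.length).length := by
    rw [hlen]; exact Nat.dvd_sub hd dvd_rfl
  have hrec := ih (l.drop t.length).length (by rw [hlen]; omega) _ rfl hcomm' hdvd'
  have hq : l.length / t.length = (l.drop t.length).length / t.length + 1 := by
    rw [hlen]
    rcases hd with ⟨c, hc⟩
    have hc1 : 1 ≤ c := by nlinarith
    rw [hc, Nat.mul_div_cancel_left _ htpos]
    have : t.length * c - t.length = t.length * (c - 1) := by
      rw [Nat.mul_sub]; omega
    rw [this, Nat.mul_div_cancel_left _ htpos]
    omega
  rw [hq, List.replicate_succ, List.flatten_cons, ← hrec, ← hsplit]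


lemma rotate_mul_eq {w : List A} {d : ℕ} (h : w.rotate d = w) (k : ℕ) :
    w.rotate (k * d) = w := by
  induction k with
  | zero => simp
  | succ k ih =>
    have : w.rotate (k * d + d) = (w.rotate (k*d)).rotate d := (List.rotate_rotate _ _ _).symm
    rw [Nat.succ_mul, this, ih, h]


lemma not_prim_of_rotate_eq {w : List A} {d : ℕ} (h : w.rotate d = w) (h0 : 0 < d)
    (hd : d < w.length) : ¬ Primitive w := by
  set n := w.length with hn
  have hnpos : 0 < n := by omega
  set g := Nat.gcd d n with hg
  have hgpos : 0 < g := Nat.gcd_pos_of_pos_left _ h0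
  have hgd : g ≤ d := Nat.gcd_le_left _ h0
  have hgn : g ∣ n := Nat.gcd_dvd_right d n
  obtain ⟨k, hk⟩ : ∃ k : ℕ, (k * d) % n = g := by
    have hb := Nat.gcd_eq_gcd_ab d n
    set a : ℤ := Nat.gcdA d n with ha
    set b : ℤ := Nat.gcdB d n with hbb
    have hn0 : (n : ℤ) ≠ 0 := by exact_mod_cast hnpos.ne'
    have hnonneg : 0 ≤ a % n := Int.emod_nonneg _ hn0
    refine ⟨(a % n).toNat, ?_⟩
    have e1 : ((a % n) * d) % n = (a * d) % n :=
      Int.ModEq.mul_right (d:ℤ) (Int.emod_emod_of_dvd a dvd_rfl)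
    have e2 : (a * d) % n = (g : ℤ) % n := by
      have : a * d = (g : ℤ) + n * (-b) := by
        push_cast [hg] at hb ⊢
        linarith [hb]
      rw [this, Int.add_mul_emod_self_left]
    have e3 : (((a % n).toNat * d : ℕ) : ℤ) % n = (g : ℤ) := by
      push_cast [Int.toNat_of_nonneg hnonneg]
      rw [e1, e2]
      have : (g : ℤ) < n := by exact_mod_cast (by omega : g < n)
      rw [Int.emod_eq_of_lt (by exact_mod_cast hgpos.le) this]
    have e4 : ((((a % n).toNat * d) % n : ℕ) : ℤ) = ((g : ℕ) : ℤ) := by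
      push_cast
      rw [← e3]
      push_cast
      ring_nf
    exact_mod_cast e4
  have hrotg : w.rotate g = w := by
    rw [← hk, List.rotate_mod, rotate_mul_eq h]
  have hgle : g ≤ n := Nat.le_of_dvd hnpos hgn
  have hw1 : w = w.take g ++ w.drop g := (List.take_append_drop _ _).symm
  have hw2 : w = w.drop g ++ w.take g := by
    conv_lhs => rw [← hrotg, List.rotate_eq_drop_append_take hgle]
  have hcomm : w.take g ++ w = w ++ w.take g := by
    calc w.take g ++ w = w.take g ++ (w.drop g ++ w.take g) := by rw [← hw2]
      _ = (w.take g ++ w.drop g) ++ w.take g := by rw [List.append_assoc]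
      _ = w ++ w.take g := by rw [← hw1]
  have hlt : (w.take g).length = g := by simp; omega
  have hdvd : (w.take g).length ∣ w.length := by rw [hlt]; exact hgn
  have hpow := comm_pow (w.take g) w hcomm hdvd
  rw [hlt] at hpow
  intro ⟨hne, hprim⟩
  refine hprim (w.take g) (n / g) ?_ hpow
  rcases hgn with ⟨c, hc⟩
  have : 2 ≤ c := by nlinarith
  rw [hc, Nat.mul_div_cancel_left _ hgpos]
  exact this

lemma rotate_eq_zero_of_prim {w : List A} (hp : Primitive w) {i : ℕ} (hi : i < w.length)
    (h : w.rotate i = w) : i = 0 := by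
  by_contra h0
  exact not_prim_of_rotate_eq h (by omega) hi hp


lemma rotate_inj_of_prim {w : List A} (hp : Primitive w) {i j : ℕ} (hi : i < w.length)
    (hj : j < w.length) (h : w.rotate i = w.rotate j) : i = j := by
  wlog hle : i ≤ j generalizing i j
  · exact (this hj hi h.symm (by omega)).symm
  set n := w.length with hn
  have key : w.rotate (i + (n - j)) = w := by
    rw [← List.rotate_rotate, h, List.rotate_rotate]
    have e : j + (n - j) = n := by omega
    rw [e, hn, List.rotate_length]
  by_contra hne
  have h1 : 0 < i + (n - j) := by omega
  have h2 : i + (n - j) < n := by omega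
  exact not_prim_of_rotate_eq key h1 h2 hp

lemma prim_rotate {w : List A} (hp : Primitive w) (i : ℕ) : Primitive (w.rotate i) := by
  constructor
  · intro h
    have := congrArg List.length h
    simp at this
    exact hp.1 this
  · intro u r hr hpow
    have hune : u ≠ [] := by
      rintro rfl
      simp at hpow
      exact hp.1 (by simpa using congrArg List.length hpow)
    have hupos : 0 < u.length := List.length_pos_iff.mpr hune
    set n := w.length with hn
    have hlen : n = r * u.length := by
      have := congrArg List.length hpow
      simpa [hn, mul_comm] using this
    have hult : u.length < n := by nlinarith
    -- rotating the power by |u| fixes it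
    have hfix : ((List.replicate r u).flatten).rotate u.length = (List.replicate r u).flatten := by
      have hsplit : (List.replicate r u).flatten = u ++ (List.replicate (r-1) u).flatten := by
        have : r = (r - 1) + 1 := by omega
        rw [this]
        simp [List.replicate_succ]
      have hle : u.length ≤ ((List.replicate r u).flatten).length := by
        rw [hsplit]; simp
      rw [List.rotate_eq_drop_append_take hle]
      conv_lhs => rw [hsplit]
      rw [show (u ++ (List.replicate (r-1) u).flatten).drop u.length
            = (List.replicate (r-1) u).flatten from List.drop_left,
          show (u ++ (List.replicate (r-1) u).flatten).take u.length = u from List.take_left]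
      rw [← List.flatten_concat]
      congr 1
      rw [← List.replicate_succ']
      congr 1
      omega
    rw [← hpow] at hfix
    -- transfer to w
    have hwfix : w.rotate u.length = w := by
      have hj : (w.rotate i).rotate (n - i % n) = w := by
        rw [← List.rotate_mod w i, List.rotate_rotate]
        have : i % n + (n - i % n) = n := by
          have : i % n < n := Nat.mod_lt _ (by omega)
          omega
        rw [this, hn, List.rotate_length]
      calc w.rotate u.length = (((w.rotate i).rotate (n - i % n))).rotate u.length := by rw [hj]
        _ = (((w.rotate i).rotate u.length)).rotate (n - i % n) := by
            simp only [List.rotate_rotate]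
            congr 1
            omega
        _ = (w.rotate i).rotate (n - i % n) := by rw [hfix]
        _ = w := hj
    exact not_prim_of_rotate_eq hwfix hupos hult hp




lemma smallest_unique [LinearOrder A] {a b : A} {w : List A} (ha : Smallest a w)
    (hb : Smallest b w) : a = b :=
  le_antisymm (ha.2 b hb.1) (hb.2 a ha.1)

lemma smallest_rotate [LinearOrder A] {a : A} {w : List A} (ha : Smallest a w) (i : ℕ) :
    Smallest a (w.rotate i) :=
  ⟨List.mem_rotate.mpr ha.1, fun b hb => ha.2 b (List.mem_rotate.mp hb)⟩

lemma block_ne_nil {a : A} {B : List A} (h : IsBlock a B) : B ≠ [] := by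
  obtain ⟨k, t, hk, ht, -, rfl⟩ := h
  simp [ht]


lemma block_head {a : A} {B : List A} (h : IsBlock a B) : B[0]? = some a := by
  obtain ⟨k, t, hk, ht, -, rfl⟩ := h
  rw [List.getElem?_append, if_pos (by simp; omega)]
  simp [List.getElem?_replicate, hk]

lemma block_last {a : A} {B : List A} (h : IsBlock a B) : B.getLast? ≠ some a := by
  obtain ⟨k, t, hk, ht, hat, rfl⟩ := h
  rw [List.getLast?_append, List.getLast?_eq_getLast (l := t) ht]
  simp only [Option.some_or]
  intro hc
  simp only [Option.some.injEq] at hc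
  exact hat (hc ▸ List.getLast_mem ht)

lemma decomp_head {a : A} {Bs : List (List A)} {w : List A} (h : IsBlockDecomp a Bs w)
    (hw : w ≠ []) : w[0]? = some a := by
  obtain ⟨rfl, hB⟩ := h
  cases Bs with
  | nil => simp at hw
  | cons C Cs =>
    have hC := hB C (by simp)
    have hCne := block_ne_nil hC
    rw [List.flatten_cons, List.getElem?_append,
      if_pos (by simpa using List.length_pos_iff.mpr hCne)]
    exact block_head hC

lemma decomp_last {a : A} {Bs : List (List A)} {w : List A} (h : IsBlockDecomp a Bs w)
    (hw : w ≠ []) : w.getLast? ≠ some a := by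
  obtain ⟨rfl, hB⟩ := h
  rcases List.eq_nil_or_concat Bs with rfl | ⟨Cs, C, rfl⟩
  · simp at hw
  have hC := hB C (by simp)
  rw [List.concat_eq_append, List.flatten_concat, List.getLast?_append,
    List.getLast?_eq_getLast (l := C) (block_ne_nil hC)]
  simp only [Option.some_or]
  rw [← List.getLast?_eq_getLast (l := C) (block_ne_nil hC)]
  exact block_last hC

section WordIdx
variable {a : A} {w B : List A} {Bs : List (List A)} {k : ℕ} {t : List A}

lemma first_block_len_le (h : IsBlockDecomp a (B :: Bs) w) : B.length ≤ w.length := by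
  obtain ⟨rfl, -⟩ := h
  simp

lemma w_idx_lo (h : IsBlockDecomp a (B :: Bs) w) (hB : B = List.replicate k a ++ t)
    {i : ℕ} (hi : i < k) : w[i]? = some a := by
  obtain ⟨rfl, -⟩ := h
  rw [List.flatten_cons, hB, List.append_assoc, List.getElem?_append,
    if_pos (by simp; omega)]
  simp [List.getElem?_replicate, hi]

lemma w_idx_hi (h : IsBlockDecomp a (B :: Bs) w) (hB : B = List.replicate k a ++ t)
    (hat : a ∉ t) {i : ℕ} (hki : k ≤ i) (hiB : i < B.length) : w[i]? ≠ some a := by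
  obtain ⟨rfl, -⟩ := h
  have hkl : (List.replicate k a).length = k := by simp
  have hBl : B.length = k + t.length := by simp [hB]
  rw [List.flatten_cons, hB, List.append_assoc, List.getElem?_append_right (by simp; omega),
    List.getElem?_append, if_pos (by simp; omega)]
  rw [List.getElem?_eq_getElem (by simp; omega)]
  intro hc
  simp only [Option.some.injEq] at hc
  exact hat (hc ▸ List.getElem_mem _)

lemma w_idx_B (h : IsBlockDecomp a (B :: Bs) w) (hBs : Bs ≠ []) : w[B.length]? = some a := by
  obtain ⟨rfl, hblk⟩ := h
  rw [List.flatten_cons, List.getElem?_append_right (le_refl _), Nat.sub_self]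
  exact decomp_head ⟨rfl, fun C hC => hblk C (by simp [hC])⟩ (by
    cases Bs with
    | nil => exact absurd rfl hBs
    | cons C Cs =>
      have := block_ne_nil (hblk C (by simp))
      simp [this])

lemma w_idx_Bm1 (h : IsBlockDecomp a (B :: Bs) w) : w[B.length - 1]? ≠ some a := by
  obtain ⟨rfl, hblk⟩ := h
  have hB := hblk B (by simp)
  have hBne := block_ne_nil hB
  have hBpos : 0 < B.length := List.length_pos_iff.mpr hBne
  rw [List.flatten_cons, List.getElem?_append, if_pos (by omega),
    ← List.getLast?_eq_getElem?]
  exact block_last hB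

lemma w_last (h : IsBlockDecomp a (B :: Bs) w) : w[w.length - 1]? ≠ some a := by
  have hw : w ≠ [] := by
    obtain ⟨rfl, hblk⟩ := h
    have := block_ne_nil (hblk B (by simp))
    simp [this]
  rw [← List.getLast?_eq_getElem?]
  exact decomp_last h hw

lemma rot_idx_lo {r p : ℕ} (hr : r ≤ w.length) (hp : p < w.length - r) :
    (w.rotate r)[p]? = w[r + p]? := by
  rw [List.rotate_eq_drop_append_take hr, List.getElem?_append, if_pos (by simp; omega),
    List.getElem?_drop]

lemma rot_idx_hi {r p : ℕ} (hr : r ≤ w.length) (hp : w.length - r ≤ p)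
    (hp2 : p < w.length) : (w.rotate r)[p]? = w[p - (w.length - r)]? := by
  rw [List.rotate_eq_drop_append_take hr, List.getElem?_append_right (by simp; omega)]
  rw [List.getElem?_take]
  simp only [List.length_drop]
  rw [if_pos (by omega)]

end WordIdx


def runStarts [LinearOrder A] (v : List A) : Set ℕ :=
  {i | i < v.length ∧ ∃ a, Smallest a v ∧ v[i]? = some a ∧ (i = 0 ∨ v[i - 1]? ≠ some a)}

lemma phi_eq_of_inW [LinearOrder A] {v : List A} (h : InW v) : phi v = v := by
  simp only [phi]
  rw [if_pos h]

lemma phi_eq_of_not_inW [LinearOrder A] {v : List A} (h : ¬ InW v) :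
    phi v = v.rotate (sSup (runStarts v)) := by
  simp only [phi]
  rw [if_neg h]
  rfl

lemma mem_runStarts [LinearOrder A] {a : A} {v : List A} (ha : Smallest a v) {i : ℕ} :
    i ∈ runStarts v ↔ i < v.length ∧ v[i]? = some a ∧ (i = 0 ∨ v[i - 1]? ≠ some a) := by
  constructor
  · rintro ⟨h1, a', ha', h2, h3⟩
    obtain rfl : a' = a := smallest_unique ha' ha
    exact ⟨h1, h2, h3⟩
  · rintro ⟨h1, h2, h3⟩
    exact ⟨h1, a, ha, h2, h3⟩

/-- `φ : P_n → W_n` is surjective, and the preimage of any `w ∈ W_n` has cardinality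
equal to the length of the first block of `w`. -/
theorem stmt_8 [LinearOrder A] (n : ℕ) :
    (∀ w : List A, w.length = n → InW w →
      ∃ v : List A, Primitive v ∧ v.length = n ∧ phi v = w) ∧
    (∀ (w : List A) (a : A) (B : List A) (Bs : List (List A)),
      w.length = n → Smallest a w → IsBlockDecomp a (B :: Bs) w → Primitive w →
      Set.ncard {v : List A | Primitive v ∧ v.length = n ∧ phi v = w} = B.length) := by
  constructor
  · intro w hlen hW
    exact ⟨w, hW.1, hlen, phi_eq_of_inW hW⟩
  intro w a B Bs hlen hsm hdec hprim
  obtain ⟨k, t, hk, ht, hat, hB⟩ := hdec.2 B (by simp)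
  have hW : InW w := ⟨hprim, a, B :: Bs, hsm, hdec⟩
  have hwne : w ≠ [] := hprim.1
  have hn0 : 0 < n := by rw [← hlen]; exact List.length_pos_iff.mpr hwne
  have hBle : B.length ≤ n := by rw [← hlen]; exact first_block_len_le hdec
  have hBlen : B.length = k + t.length := by simp [hB]
  have hB0 : 0 < B.length := by omega
  -- the preimage is exactly the set of rotations of w by r < B.length
  have hset : {v : List A | Primitive v ∧ v.length = n ∧ phi v = w}
      = ↑((Finset.range B.length).image (fun r => w.rotate r)) := by
    ext v
    simp only [Set.mem_setOf_eq, Finset.coe_image, Finset.coe_range, Set.mem_image,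
      Set.mem_Iio]
    constructor
    · -- ⊆ : any preimage is such a rotation
      rintro ⟨hpv, hlv, hphi⟩
      by_cases hv : InW v
      · rw [phi_eq_of_inW hv] at hphi
        exact ⟨0, hB0, by rw [List.rotate_zero, ← hphi]⟩
      · rw [phi_eq_of_not_inW hv] at hphi
        set s := sSup (runStarts v) with hs
        have hvnew : v ≠ w := by
          rintro rfl
          exact hv hW
        have hbdd : BddAbove (runStarts v) := ⟨v.length, fun x hx => le_of_lt hx.1⟩
        have hSne : (runStarts v).Nonempty := by
          rcases Set.eq_empty_or_nonempty (runStarts v) with hS | hS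
          · rw [hs, hS] at hphi
            simp only [csSup_empty, bot_eq_zero, List.rotate_zero] at hphi
            exact absurd hphi hvnew
          · exact hS
        have hsmem : s ∈ runStarts v := Nat.sSup_mem hSne hbdd
        have hsa : Smallest a v := by
          have h1 : a ∈ v := by
            have := hsm.1
            rw [← hphi] at this
            exact List.mem_rotate.mp this
          refine ⟨h1, fun b hb => hsm.2 b ?_⟩
          rw [← hphi]
          exact List.mem_rotate.mpr hb
        rw [mem_runStarts hsa] at hsmem
        obtain ⟨hslt, hva, hvp⟩ := hsmem
        rw [hlv] at hslt
        have hs0 : 0 < s := by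
          rcases Nat.eq_zero_or_pos s with h0 | h
          · rw [h0, List.rotate_zero] at hphi
            exact absurd hphi hvnew
          · exact h
        refine ⟨n - s, ?_, ?_⟩
        swap
        · -- w.rotate (n - s) = v
          rw [← hphi, List.rotate_rotate]
          have : s + (n - s) = n := by omega
          rw [this, ← hlv, List.rotate_length]
        -- n - s < B.length
        by_contra hge
        push_neg at hge
        set r := n - s with hr
        have hveq : v = w.rotate r := by
          rw [← hphi, List.rotate_rotate]
          have : s + r = n := by omega
          rw [this, ← hlv, List.rotate_length]
        have hrn : r < n := by omega
        rcases eq_or_lt_of_le hge with heq | hlt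
        · -- r = B.length : v would be in W
          apply hv
          refine ⟨hpv, a, Bs ++ [B], hsa, ?_, ?_⟩
          · rw [hveq, ← heq, hdec.1, List.flatten_cons, List.flatten_concat,
              List.rotate_eq_drop_append_take (by simp only [List.length_append]; omega),
              List.drop_left, List.take_left]
          · intro C hC
            rcases List.mem_append.mp hC with h | h
            · exact hdec.2 C (by simp [h])
            · simp at h
              rw [h]
              exact hdec.2 B (by simp)
        · -- B.length < r : contradiction with maximality of s
          have hBs : Bs ≠ [] := by
            rintro rfl
            have : w = B := by rw [hdec.1]; simp
            rw [this] at hlen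
            omega
          have hp : s + B.length ∈ runStarts v := by
            rw [mem_runStarts hsa]
            have hwr : w.length = n := hlen
            have hsr : n - r = s := by omega
            refine ⟨by rw [hlv]; omega, ?_, Or.inr ?_⟩
            · rw [hveq, rot_idx_hi (by omega) (by omega) (by rw [hwr]; omega)]
              rw [hwr, hsr]
              have : s + B.length - s = B.length := by omega
              rw [this]
              exact w_idx_B hdec hBs
            · rw [hveq, rot_idx_hi (by omega) (by rw [hwr]; omega) (by rw [hwr]; omega)]
              rw [hwr, hsr]
              have : s + B.length - 1 - s = B.length - 1 := by omega
              rw [this]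
              exact w_idx_Bm1 hdec
          have := le_csSup hbdd hp
          rw [← hs] at this
          omega
    · -- ⊇ : every such rotation is a preimage
      rintro ⟨r, hr, rfl⟩
      refine ⟨prim_rotate hprim r, by simp [hlen], ?_⟩
      rcases Nat.eq_zero_or_pos r with rfl | hr0
      · rw [List.rotate_zero]
        exact phi_eq_of_inW hW
      have hrn : r < n := by omega
      have hwr : w.length = n := hlen
      have hsav : Smallest a (w.rotate r) := smallest_rotate hsm r
      have hnotW : ¬ InW (w.rotate r) := by
        rintro ⟨hpv, a', Bs', hsm', hdec'⟩
        have haa : a' = a := smallest_unique hsm' hsav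
        rw [haa] at hsm' hdec'
        have hvne : w.rotate r ≠ [] := by
          intro h
          have := congrArg List.length h
          simp at this
          exact hwne this
        by_cases hrk : r ≤ k
        · -- ends with a : contradiction with decomp_last
          have h1 : (w.rotate r)[(w.rotate r).length - 1]? = some a := by
            rw [List.length_rotate, hwr,
              rot_idx_hi (by omega) (by omega) (by rw [hwr]; omega), hwr]
            have : n - 1 - (n - r) = r - 1 := by omega
            rw [this]
            exact w_idx_lo hdec hB (by omega)
          rw [← List.getLast?_eq_getElem?] at h1
          exact decomp_last hdec' hvne h1
        · -- starts with non-a : contradiction with decomp_head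
          push_neg at hrk
          have h1 : (w.rotate r)[0]? ≠ some a := by
            rw [rot_idx_lo (by omega) (by rw [hwr]; omega)]
            have : r + 0 = r := by omega
            rw [this]
            exact w_idx_hi hdec hB hat (by omega) hr
          exact h1 (decomp_head hdec' hvne)
      rw [phi_eq_of_not_inW hnotW]
      have hsup : sSup (runStarts (w.rotate r)) = n - r := by
        have hbdd : BddAbove (runStarts (w.rotate r)) :=
          ⟨(w.rotate r).length, fun x hx => le_of_lt hx.1⟩
        have hmem : n - r ∈ runStarts (w.rotate r) := by
          rw [mem_runStarts hsav]
          refine ⟨by rw [List.length_rotate, hwr]; omega, ?_, Or.inr ?_⟩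
          · rw [rot_idx_hi (by omega) (by rw [hwr]) (by rw [hwr]; omega), hwr]
            rw [Nat.sub_self]
            exact w_idx_lo hdec hB hk
          · rw [rot_idx_lo (by omega) (by rw [hwr]; omega)]
            have : r + (n - r - 1) = n - 1 := by omega
            rw [this]
            have := w_last hdec
            rw [hwr] at this
            exact this
        have hub : ∀ i ∈ runStarts (w.rotate r), i ≤ n - r := by
          intro i hi
          by_contra hgt
          push_neg at hgt
          rw [mem_runStarts hsav] at hi
          obtain ⟨hilt, hia, hip⟩ := hi
          rw [List.length_rotate, hwr] at hilt
          set q := i - (n - r) with hq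
          have hq1 : 1 ≤ q := by omega
          have hqr : q < r := by omega
          have hia' : w[q]? = some a := by
            rw [rot_idx_hi (by omega) (by rw [hwr]; omega) (by rw [hwr]; omega), hwr] at hia
            exact hia
          have hip' : w[q - 1]? ≠ some a := by
            rcases hip with h0 | h
            · omega
            · rw [rot_idx_hi (by omega) (by rw [hwr]; omega) (by rw [hwr]; omega), hwr] at h
              have : i - 1 - (n - r) = q - 1 := by omega
              rw [this] at h
              exact h
          by_cases hqk : q ≤ k
          · exact hip' (w_idx_lo hdec hB (by omega))
          · exact w_idx_hi hdec hB hat (by omega) (by omega) hia'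
        exact le_antisymm (csSup_le ⟨_, hmem⟩ hub) (le_csSup hbdd hmem)
      rw [hsup, List.rotate_rotate]
      have : r + (n - r) = n := by omega
      rw [this, ← hwr, List.rotate_length]
  rw [hset, Set.ncard_coe_finset]
  rw [Finset.card_image_of_injOn, Finset.card_range]
  intro i hi j hj hij
  simp only [Finset.coe_range, Set.mem_Iio] at hi hj
  exact rotate_inj_of_prim hprim (by omega) (by omega) hij
end
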